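/- Let R > 0 and let π ≥ β ≥ γ ≥ 0. Set A = (−R, 0), Q = P_R(β), S = P_R(γ), D = (R, 0), four points in order on the upper semicircle with AD as diameter. Then (dist Q D)² = (dist Q S)² + (dist S D)² + 2 · (dist Q S) · (dist S D) · (dist A Q) / (2R). -/

import Mathlib

noncomputable def P (R θ : ℝ) : EuclideanSpace ℝ (Fin 2) :=
  (WithLp.equiv 2 (Fin 2 → ℝ)).symm ![R * Real.cos θ, R * Real.sin θ]

lemma dist_P (R a b : ℝ) (hR : 0 ≤ R) (hba : b ≤ a) (hab : a - b ≤ 2 * Real.pi) :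
    dist (P R a) (P R b) = 2 * R * Real.sin ((a - b) / 2) := by
  have hs : 0 ≤ Real.sin ((a - b) / 2) := by
    apply Real.sin_nonneg_of_nonneg_of_le_pi <;> linarith
  have key : dist (P R a) (P R b) ^ 2 = (2 * R * Real.sin ((a - b) / 2)) ^ 2 := by
    rw [EuclideanSpace.dist_eq]
    rw [Real.sq_sqrt (by positivity)]
    have hsin : Real.sin ((a - b) / 2) ^ 2 = (1 - Real.cos (a - b)) / 2 := by
      rw [Real.sin_sq_eq_half_sub]; ring_nf
    simp only [Fin.sum_univ_two, P, WithLp.equiv_symm_apply, WithLp.ofLp_toLp, Matrix.cons_val_zero,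
      Matrix.cons_val_one, Matrix.head_cons, Real.dist_eq, sq_abs]
    rw [Real.cos_sub] at hsin
    linear_combination R ^ 2 * Real.sin_sq_add_cos_sq a + R ^ 2 * Real.sin_sq_add_cos_sq b - 4 * R ^ 2 * hsin
  have h1 : 0 ≤ dist (P R a) (P R b) := dist_nonneg
  have h2 : 0 ≤ 2 * R * Real.sin ((a - b) / 2) := by positivity
  nlinarith [key]

theorem law_of_cosines_step (R β γ : ℝ) (hR : 0 < R)
    (hγ : 0 ≤ γ) (hβγ : γ ≤ β) (hβ : β ≤ Real.pi)
    (A Q S D : EuclideanSpace ℝ (Fin 2))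
    (hA : A = P R Real.pi) (hQ : Q = P R β) (hS : S = P R γ) (hD : D = P R 0) :
    (dist Q D) ^ 2 =
      (dist Q S) ^ 2 + (dist S D) ^ 2 +
        2 * dist Q S * dist S D * dist A Q / (2 * R) := by
  have hpi := Real.pi_pos
  subst hA hQ hS hD
  rw [dist_P R β 0 hR.le (by linarith) (by linarith),
      dist_P R β γ hR.le hβγ (by linarith),
      dist_P R γ 0 hR.le hγ (by linarith),
      dist_P R Real.pi β hR.le hβ (by linarith)]
  have hAQ : Real.sin ((Real.pi - β) / 2) = Real.cos (β / 2) := by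
    rw [show (Real.pi - β) / 2 = Real.pi / 2 - β / 2 by ring, Real.sin_pi_div_two_sub]
  rw [hAQ]
  have hβ2 : Real.sin (β / 2) = Real.sin ((β - γ) / 2 + γ / 2) := by ring_nf
  rw [show (β - 0) / 2 = β / 2 by ring, show (γ - 0) / 2 = γ / 2 by ring, hβ2,
      Real.sin_add, show β / 2 = (β - γ) / 2 + γ / 2 by ring, Real.cos_add]
  have hne : (2 * R) ≠ 0 := by positivity
  field_simp
  linear_combination 1 *
    (Real.sin ((β - γ) / 2) ^ 2 * Real.sin_sq_add_cos_sq (γ / 2) +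
     Real.sin (γ / 2) ^ 2 * Real.sin_sq_add_cos_sq ((β - γ) / 2))
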